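/- For a real n×n matrix θ with all entries strictly positive, there exists an eigenvector with all coordinates strictly positive whose eigenvalue is the spectral radius of θ (Perron–Frobenius theorem for positive matrices). -/

import Mathlib

open Finset

section Aux

variable {n : ℕ}

private lemma pf_mulVec_mono (θ : Matrix (Fin n) (Fin n) ℝ) (hθ : ∀ i j, 0 ≤ θ i j)
    {x y : Fin n → ℝ} (h : ∀ j, x j ≤ y j) (i : Fin n) :
    θ.mulVec x i ≤ θ.mulVec y i := by
  simp only [Matrix.mulVec, dotProduct]
  exact Finset.sum_le_sum fun j _ => mul_le_mul_of_nonneg_left (h j) (hθ i j)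

private lemma pf_exists (hn : 0 < n) (θ : Matrix (Fin n) (Fin n) ℝ)
    (hθ : ∀ i j, 0 < θ i j) :
    ∃ (v : Fin n → ℝ) (lam : ℝ), (∀ i, 0 < v i) ∧ θ.mulVec v = lam • v ∧ 0 ≤ lam ∧
      ∀ (w : Fin n → ℝ) (c : ℝ), (∀ i, 0 ≤ w i) → (∃ j, 0 < w j) →
        (∀ i, c * w i ≤ θ.mulVec w i) → c ≤ lam := by
  have : NeZero n := ⟨hn.ne'⟩
  have hne : (Finset.univ : Finset (Fin n)).Nonempty := Finset.univ_nonempty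
  -- bounds on the entries
  set M : ℝ := Finset.univ.sup' (Finset.univ_nonempty (α := Fin n × Fin n))
    (fun p : Fin n × Fin n => θ p.1 p.2) with hM
  set m : ℝ := Finset.univ.inf' (Finset.univ_nonempty (α := Fin n × Fin n))
    (fun p : Fin n × Fin n => θ p.1 p.2) with hm
  have hm_le : ∀ i j, m ≤ θ i j := fun i j =>
    Finset.inf'_le _ (Finset.mem_univ (i, j))
  have hle_M : ∀ i j, θ i j ≤ M := fun i j =>
    Finset.le_sup' (fun p : Fin n × Fin n => θ p.1 p.2) (Finset.mem_univ (i, j))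
  have hm_pos : 0 < m := by
    obtain ⟨p, -, hp⟩ := Finset.exists_mem_eq_inf' (Finset.univ_nonempty (α := Fin n × Fin n))
      (fun p : Fin n × Fin n => θ p.1 p.2)
    rw [hm, hp]; exact hθ p.1 p.2
  have hM_pos : 0 < M := lt_of_lt_of_le hm_pos ((hm_le ⟨0, hn⟩ ⟨0, hn⟩).trans (hle_M ⟨0, hn⟩ ⟨0, hn⟩))
  set δ : ℝ := m / (n * M) with hδ
  have hδ_pos : 0 < δ := div_pos hm_pos (by positivity)
  set B : ℝ := M / δ with hB
  have hB_pos : 0 < B := div_pos hM_pos hδ_pos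
  -- basic facts about mulVec on the simplex
  have hmv_pos : ∀ w : Fin n → ℝ, (∀ i, 0 ≤ w i) → (∃ j, 0 < w j) →
      ∀ i, 0 < θ.mulVec w i := by
    intro w hw ⟨j, hj⟩ i
    simp only [Matrix.mulVec, dotProduct]
    exact Finset.sum_pos' (fun k _ => mul_nonneg (hθ i k).le (hw k))
      ⟨j, Finset.mem_univ j, mul_pos (hθ i j) hj⟩
  have hsimplex_ex : ∀ w : Fin n → ℝ, w ∈ stdSimplex ℝ (Fin n) → ∃ j, 0 < w j := by
    intro w hw
    by_contra h
    push_neg at h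
    have hz : ∀ j, w j = 0 := fun j => le_antisymm (h j) (hw.1 j)
    have h1 := hw.2
    rw [Finset.sum_congr rfl (fun j _ => hz j)] at h1
    simp at h1
  have hmv_le_M : ∀ w : Fin n → ℝ, w ∈ stdSimplex ℝ (Fin n) → ∀ i, θ.mulVec w i ≤ M := by
    intro w hw i
    simp only [Matrix.mulVec, dotProduct]
    calc ∑ j, θ i j * w j ≤ ∑ j, M * w j :=
          Finset.sum_le_sum fun j _ => mul_le_mul_of_nonneg_right (hle_M i j) (hw.1 j)
      _ = M := by rw [← Finset.mul_sum, hw.2, mul_one]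
  have hmv_ge_m : ∀ w : Fin n → ℝ, w ∈ stdSimplex ℝ (Fin n) → ∀ i, m ≤ θ.mulVec w i := by
    intro w hw i
    simp only [Matrix.mulVec, dotProduct]
    calc m = ∑ j, m * w j := by rw [← Finset.mul_sum, hw.2, mul_one]
      _ ≤ ∑ j, θ i j * w j :=
          Finset.sum_le_sum fun j _ => mul_le_mul_of_nonneg_right (hm_le i j) (hw.1 j)
  -- the total sum function
  set s : (Fin n → ℝ) → ℝ := fun w => ∑ i, θ.mulVec w i with hs
  have hs_pos : ∀ w ∈ stdSimplex ℝ (Fin n), 0 < s w := by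
    intro w hw
    exact Finset.sum_pos (fun i _ => hmv_pos w hw.1 (hsimplex_ex w hw) i) hne
  have hs_le : ∀ w ∈ stdSimplex ℝ (Fin n), s w ≤ n * M := by
    intro w hw
    calc s w ≤ ∑ _i : Fin n, M := Finset.sum_le_sum fun i _ => hmv_le_M w hw i
      _ = n * M := by simp [mul_comm]
  -- the normalized image set T
  set T : Set (Fin n → ℝ) := (fun w => (s w)⁻¹ • θ.mulVec w) '' stdSimplex ℝ (Fin n) with hT
  have hT_simplex : ∀ u ∈ T, u ∈ stdSimplex ℝ (Fin n) := by
    rintro u ⟨w, hw, rfl⟩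
    constructor
    · intro i
      exact mul_nonneg (inv_nonneg.2 (hs_pos w hw).le) (hmv_pos w hw.1 (hsimplex_ex w hw) i).le
    · simp only [Pi.smul_apply, smul_eq_mul, ← Finset.mul_sum]
      exact inv_mul_cancel₀ (hs_pos w hw).ne'
  have hT_lb : ∀ u ∈ T, ∀ i, δ ≤ u i := by
    rintro u ⟨w, hw, rfl⟩ i
    have h1 : m ≤ θ.mulVec w i := hmv_ge_m w hw i
    have h2 : s w ≤ n * M := hs_le w hw
    have h3 : 0 < s w := hs_pos w hw
    calc δ = m / (n * M) := rfl
      _ ≤ θ.mulVec w i / s w := by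
          apply div_le_div₀ (hmv_pos w hw.1 (hsimplex_ex w hw) i).le h1 h3 h2
      _ = (s w)⁻¹ • θ.mulVec w i := by rw [smul_eq_mul, div_eq_inv_mul]
  have hT_compact : IsCompact T := by
    apply (isCompact_stdSimplex ℝ (Fin n)).image_of_continuousOn
    have hmv_cont : Continuous fun w : Fin n → ℝ => θ.mulVec w := by
      apply continuous_pi
      intro i
      simp only [Matrix.mulVec, dotProduct]
      exact continuous_finset_sum _ fun j _ => continuous_const.mul (continuous_apply j)
    have hs_cont : Continuous s := by
      exact continuous_finset_sum _ fun i _ => (continuous_apply i).comp hmv_cont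
    exact ((hs_cont.continuousOn.inv₀ fun w hw => (hs_pos w hw).ne').smul
      hmv_cont.continuousOn)
  -- normalization lemma
  have hnorm : ∀ w : Fin n → ℝ, (∀ i, 0 ≤ w i) → (∃ j, 0 < w j) →
      ∃ a : ℝ, 0 < a ∧ a • θ.mulVec w ∈ T := by
    intro w hw hwj
    have hsum_pos : 0 < ∑ i, w i := by
      obtain ⟨j, hj⟩ := hwj
      exact Finset.sum_pos' (fun i _ => hw i) ⟨j, Finset.mem_univ j, hj⟩
    set w' : Fin n → ℝ := (∑ i, w i)⁻¹ • w with hw'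
    have hw'_mem : w' ∈ stdSimplex ℝ (Fin n) := by
      constructor
      · intro i; exact mul_nonneg (inv_nonneg.2 hsum_pos.le) (hw i)
      · simp only [hw', Pi.smul_apply, smul_eq_mul, ← Finset.mul_sum]
        exact inv_mul_cancel₀ hsum_pos.ne'
    refine ⟨(s w')⁻¹ * (∑ i, w i)⁻¹,
      mul_pos (inv_pos.2 (hs_pos _ hw'_mem)) (inv_pos.2 hsum_pos), ?_⟩
    refine ⟨w', hw'_mem, ?_⟩
    show (s w')⁻¹ • θ.mulVec ((∑ i, w i)⁻¹ • w) = _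
    rw [Matrix.mulVec_smul, smul_smul]
  -- the compact constraint set K
  set K : Set (ℝ × (Fin n → ℝ)) :=
    {p | p.1 ∈ Set.Icc (0:ℝ) B ∧ p.2 ∈ T ∧ ∀ i, p.1 * p.2 i ≤ θ.mulVec p.2 i} with hK
  have hK_compact : IsCompact K := by
    have : K = (Set.Icc (0:ℝ) B ×ˢ T) ∩ ⋂ i, {p : ℝ × (Fin n → ℝ) |
        p.1 * p.2 i ≤ θ.mulVec p.2 i} := by
      ext p
      simp only [hK, Set.mem_setOf_eq, Set.mem_inter_iff, Set.mem_prod, Set.mem_iInter]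
      tauto
    rw [this]
    apply (isCompact_Icc.prod hT_compact).inter_right
    apply isClosed_iInter
    intro i
    apply isClosed_le
    · exact continuous_fst.mul ((continuous_apply i).comp continuous_snd)
    · have : Continuous fun u : Fin n → ℝ => θ.mulVec u i := by
        simp only [Matrix.mulVec, dotProduct]
        exact continuous_finset_sum _ fun j _ => continuous_const.mul (continuous_apply j)
      exact this.comp continuous_snd
  have hK_ne : K.Nonempty := by
    set e : Fin n → ℝ := fun _ => (n : ℝ)⁻¹ with he
    have he_mem : e ∈ stdSimplex ℝ (Fin n) := by
      constructor
      · intro i; positivity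
      · simp [he, Finset.card_univ]
    obtain ⟨a, ha, hmem⟩ := hnorm e (fun i => by positivity) ⟨⟨0, hn⟩, by positivity⟩
    refine ⟨(0, a • θ.mulVec e), ⟨Set.mem_Icc.2 ⟨le_refl _, hB_pos.le⟩, hmem, ?_⟩⟩
    intro i
    simp only [zero_mul]
    exact (hmv_pos _ (fun j => (hT_simplex _ hmem).1 j)
      (hsimplex_ex _ (hT_simplex _ hmem)) i).le
  -- maximize the first coordinate over K
  obtain ⟨⟨c₀, v₀⟩, hmem₀, hmax'⟩ :=
    hK_compact.exists_isMaxOn hK_ne continuous_fst.continuousOn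
  have hmax : ∀ p ∈ K, p.1 ≤ c₀ := fun p hp => hmax' hp
  obtain ⟨hc₀_Icc, hv₀_T, hineq₀⟩ := hmem₀
  have hc₀_nonneg : 0 ≤ c₀ := hc₀_Icc.1
  have hv₀_simplex := hT_simplex _ hv₀_T
  have hv₀_pos : ∀ i, 0 < v₀ i := fun i => lt_of_lt_of_le hδ_pos (hT_lb _ hv₀_T i)
  -- the Collatz–Wielandt maximality property
  have hcw : ∀ (w : Fin n → ℝ) (c : ℝ), (∀ i, 0 ≤ w i) → (∃ j, 0 < w j) →
      (∀ i, c * w i ≤ θ.mulVec w i) → c ≤ c₀ := by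
    intro w c hw hwj hcwle
    rcases le_or_gt c 0 with hc | hc
    · exact hc.trans hc₀_nonneg
    obtain ⟨a, ha, haT⟩ := hnorm w hw hwj
    set u : Fin n → ℝ := θ.mulVec w with hu
    set v₁ : Fin n → ℝ := a • u with hv₁
    have hu_pos : ∀ i, 0 < u i := hmv_pos w hw hwj
    have hv₁_simplex := hT_simplex _ haT
    have hv₁_lb : ∀ i, δ ≤ v₁ i := hT_lb _ haT
    have hstep : ∀ i, c * u i ≤ θ.mulVec u i := by
      intro i
      calc c * u i = θ.mulVec (fun j => c * w j) i := by
            rw [show (fun j => c * w j) = c • w from rfl, Matrix.mulVec_smul]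
            simp [hu]
        _ ≤ θ.mulVec u i := pf_mulVec_mono θ (fun i j => (hθ i j).le) hcwle i
    have hv₁step : ∀ i, c * v₁ i ≤ θ.mulVec v₁ i := by
      intro i
      have := mul_le_mul_of_nonneg_left (hstep i) ha.le
      calc c * v₁ i = a * (c * u i) := by simp [hv₁]; ring
        _ ≤ a * θ.mulVec u i := this
        _ = θ.mulVec v₁ i := by rw [hv₁, Matrix.mulVec_smul]; simp
    have hcB : c ≤ B := by
      have h1 : c * δ ≤ c * v₁ ⟨0, hn⟩ := mul_le_mul_of_nonneg_left (hv₁_lb _) hc.le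
      have h2 : c * v₁ ⟨0, hn⟩ ≤ M := (hv₁step _).trans (hmv_le_M _ hv₁_simplex _)
      rw [hB, le_div_iff₀ hδ_pos]
      exact h1.trans h2
    exact hmax (c, v₁) ⟨Set.mem_Icc.2 ⟨hc.le, hcB⟩, haT, hv₁step⟩
  -- the maximizer is an eigenvector
  have heig : θ.mulVec v₀ = c₀ • v₀ := by
    by_contra hne'
    have hex : ∃ j, c₀ * v₀ j < θ.mulVec v₀ j := by
      by_contra h
      push_neg at h
      apply hne'
      funext i
      exact le_antisymm (h i) (hineq₀ i) |>.symm.trans (by simp [mul_comm]) |>.symm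
    obtain ⟨j₀, hj₀⟩ := hex
    set u : Fin n → ℝ := θ.mulVec v₀ with hu
    have hu_pos : ∀ i, 0 < u i := hmv_pos v₀ hv₀_simplex.1 ⟨j₀, hv₀_pos j₀⟩
    have hstrict : ∀ i, c₀ * u i < θ.mulVec u i := by
      intro i
      have : ∑ j, θ i j * (c₀ * v₀ j) < ∑ j, θ i j * u j := by
        apply Finset.sum_lt_sum
        · intro j _
          exact mul_le_mul_of_nonneg_left (hineq₀ j) (hθ i j).le
        · exact ⟨j₀, Finset.mem_univ j₀, mul_lt_mul_of_pos_left hj₀ (hθ i j₀)⟩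
      calc c₀ * u i = ∑ j, θ i j * (c₀ * v₀ j) := by
            simp only [hu, Matrix.mulVec, dotProduct, Finset.mul_sum]
            congr 1; funext j; ring
        _ < ∑ j, θ i j * u j := this
        _ = θ.mulVec u i := by simp [Matrix.mulVec, dotProduct]
    obtain ⟨a, ha, haT⟩ := hnorm v₀ hv₀_simplex.1 ⟨j₀, hv₀_pos j₀⟩
    set v₁ : Fin n → ℝ := a • u with hv₁
    have hv₁_simplex := hT_simplex _ haT
    have hv₁_pos : ∀ i, 0 < v₁ i := fun i => lt_of_lt_of_le hδ_pos (hT_lb _ haT i)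
    have hv₁strict : ∀ i, c₀ * v₁ i < θ.mulVec v₁ i := by
      intro i
      have := mul_lt_mul_of_pos_left (hstrict i) ha
      calc c₀ * v₁ i = a * (c₀ * u i) := by simp [hv₁]; ring
        _ < a * θ.mulVec u i := this
        _ = θ.mulVec v₁ i := by rw [hv₁, Matrix.mulVec_smul]; simp
    set c₁ : ℝ := Finset.univ.inf' hne (fun i => θ.mulVec v₁ i / v₁ i) with hc₁
    have hc₀c₁ : c₀ < c₁ := by
      rw [hc₁, Finset.lt_inf'_iff]
      intro i _
      rw [lt_div_iff₀ (hv₁_pos i)]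
      calc c₀ * v₁ i < θ.mulVec v₁ i := hv₁strict i
        _ = θ.mulVec v₁ i := rfl
    have hc₁le : ∀ i, c₁ * v₁ i ≤ θ.mulVec v₁ i := by
      intro i
      have h1 : c₁ ≤ θ.mulVec v₁ i / v₁ i := Finset.inf'_le _ (Finset.mem_univ i)
      rw [← div_mul_cancel₀ (θ.mulVec v₁ i) (hv₁_pos i).ne']
      exact mul_le_mul_of_nonneg_right h1 (hv₁_pos i).le
    have hc₁B : c₁ ≤ B := by
      have h1 : c₁ ≤ θ.mulVec v₁ ⟨0, hn⟩ / v₁ ⟨0, hn⟩ := Finset.inf'_le _ (Finset.mem_univ _)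
      refine h1.trans ?_
      exact div_le_div₀ hM_pos.le (hmv_le_M _ hv₁_simplex _) hδ_pos (hT_lb _ haT _)
    have : c₁ ≤ c₀ :=
      hmax (c₁, v₁) ⟨Set.mem_Icc.2 ⟨hc₀_nonneg.trans hc₀c₁.le, hc₁B⟩, haT, hc₁le⟩
    exact absurd this (not_le.2 hc₀c₁)
  exact ⟨v₀, c₀, hv₀_pos, heig, hc₀_nonneg, hcw⟩

end Aux

/-- Perron–Frobenius for entrywise positive matrices: there is a strictly positive
eigenvector whose eigenvalue dominates in modulus every (complex) eigenvalue, i.e.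
whose eigenvalue is the spectral radius. -/
theorem perron_frobenius_positive {n : ℕ} (hn : 0 < n)
    (θ : Matrix (Fin n) (Fin n) ℝ) (hθ : ∀ i j, 0 < θ i j) :
    ∃ (v : Fin n → ℝ) (lam : ℝ), (∀ i, 0 < v i) ∧ θ.mulVec v = lam • v ∧
      ∀ μ ∈ spectrum ℂ (θ.map (Complex.ofReal)), ‖μ‖ ≤ lam := by
  obtain ⟨v, lam, hv, heig, hlam0, hcw⟩ := pf_exists hn θ hθ
  refine ⟨v, lam, hv, heig, ?_⟩
  intro μ hμ
  set A : Matrix (Fin n) (Fin n) ℂ := θ.map Complex.ofReal with hA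
  have hnu : ¬ IsUnit (algebraMap ℂ (Matrix (Fin n) (Fin n) ℂ) μ - A) := spectrum.mem_iff.mp hμ
  have hdet : (algebraMap ℂ (Matrix (Fin n) (Fin n) ℂ) μ - A).det = 0 := by
    by_contra hd
    exact hnu ((Matrix.isUnit_iff_isUnit_det _).mpr (Ne.isUnit hd))
  obtain ⟨z, hz0, hz⟩ := (Matrix.exists_mulVec_eq_zero_iff).mpr hdet
  have hAz : A.mulVec z = μ • z := by
    have h1 : (algebraMap ℂ (Matrix (Fin n) (Fin n) ℂ) μ - A).mulVec z
        = μ • z - A.mulVec z := by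
      rw [Matrix.sub_mulVec]
      congr 1
      rw [Algebra.algebraMap_eq_smul_one, Matrix.smul_mulVec, Matrix.one_mulVec]
    rw [hz] at h1
    exact (sub_eq_zero.mp h1.symm).symm
  set w : Fin n → ℝ := fun i => ‖z i‖ with hw
  have hw0 : ∀ i, 0 ≤ w i := fun i => norm_nonneg _
  have hwj : ∃ j, 0 < w j := by
    obtain ⟨j, hj⟩ := Function.ne_iff.mp hz0
    exact ⟨j, norm_pos_iff.mpr hj⟩
  have hineq : ∀ i, ‖μ‖ * w i ≤ θ.mulVec w i := by
    intro i
    have h1 : ‖μ‖ * w i = ‖(A.mulVec z) i‖ := by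
      rw [hAz]
      simp [hw, map_mul]
    rw [h1]
    calc ‖(A.mulVec z) i‖ = ‖∑ j, A i j * z j‖ := by
          simp [Matrix.mulVec, dotProduct]
      _ ≤ ∑ j, ‖A i j * z j‖ := norm_sum_le _ _
      _ = ∑ j, θ i j * w j := by
          apply Finset.sum_congr rfl
          intro j _
          rw [norm_mul]
          simp [hA, hw, Matrix.map_apply, Complex.norm_real, abs_of_pos (hθ i j)]
      _ = θ.mulVec w i := by simp [Matrix.mulVec, dotProduct]
  exact hcw w (‖μ‖) hw0 hwj hineq
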